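/- arXiv:2403.18574 — 2 statements merged into one kernel-verified Lean document; each statement's English description precedes it below -/
import Mathlib

section
/- If f ∈ F is nonzero and i is a maximal index for f (i.e., ν_i(f) is nonzero and maximal among all ν_j(f)), then i is equivalent to a right admissible index and also equivalent to a left admissible index, where indices i, j are equivalent if ρ_i(f) = ρ_j(f). -/
open scoped Classical

noncomputable section

/-- `f` is a frequency sequence: `f 0 = 0` and finite support. -/
def IsFreq (f : ℕ → ℕ) : Prop := f 0 = 0 ∧ (Function.support f).Finite

/-- size `|f| = ∑ i·f i`. -/
def fsize (f : ℕ → ℕ) : ℕ := ∑ᶠ n, n * f n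

/-- length `ℓ(f) = ∑ f i`. -/
def flen (f : ℕ → ℕ) : ℕ := ∑ᶠ n, f n

/-- the support `S(f)`. -/
def suppF (f : ℕ → ℕ) : Set ℕ := {i | 1 ≤ i ∧ f i ≠ 0}

/-- `[i,j]` is a spread of `f`: a maximal interval contained in the support. -/
def IsSpread (f : ℕ → ℕ) (i j : ℕ) : Prop :=
  1 ≤ i ∧ i ≤ j ∧ (∀ k, i ≤ k → k ≤ j → f k ≠ 0) ∧ (i = 1 ∨ f (i - 1) = 0) ∧ f (j + 1) = 0

/-- `L(f)`: every other element of each spread, starting from the left end. -/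
def Lset (f : ℕ → ℕ) : Set ℕ :=
  {q | ∃ i j, IsSpread f i j ∧ i ≤ q ∧ q ≤ j ∧ (q - i) % 2 = 0}

/-- `R(f)`: every other element of each spread, starting from the right end. -/
def Rset (f : ℕ → ℕ) : Set ℕ :=
  {q | ∃ i j, IsSpread f i j ∧ i ≤ q ∧ q ≤ j ∧ (j - q) % 2 = 0}

/-- the 2-measure, as the cardinality of `R(f)`. -/
def mu2 (f : ℕ → ℕ) : ℕ := (Rset f).ncard

/-- The Burge demotion operator `∂`. -/
def dB (f : ℕ → ℕ) : ℕ → ℕ := fun n =>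
  if n = 0 then 0
  else f n - (if n ∈ Rset f then 1 else 0) + (if n + 1 ∈ Rset f then 1 else 0)

/-- The promotion operator `α`. -/
def aB (f : ℕ → ℕ) : ℕ → ℕ := fun n =>
  if n = 0 then 0
  else f n - (if n ∈ Lset f then 1 else 0) + (if n - 1 ∈ Lset f then 1 else 0)

/-- the shift `(f₂, f₃, …)`; on partitions this is `P ↦ P - 1`. -/
def tailF (f : ℕ → ℕ) : ℕ → ℕ := fun n => if n = 0 then 0 else f (n + 1)

/-- The operator `β`: `β(f) = (f₁ + 1, α(f₂, f₃, …))`. -/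
def bB (f : ℕ → ℕ) : ℕ → ℕ := fun n =>
  if n = 0 then 0 else if n = 1 then f 1 + 1 else aB (tailF f) (n - 1)

/-- the zero sequence (empty partition). -/
def zeroF : ℕ → ℕ := fun _ => 0

/-- `k` minimal with `∂^[k] f = 0`. -/
def chainK (f : ℕ → ℕ) : ℕ :=
  if h : ∃ m, dB^[m] f = zeroF then Nat.find h else 0

/-- The Burge code of `f`, as a list of letters; `false` = `a`, `true` = `b`.
The `i`-th letter (0-indexed `i`) records whether `∂^[i] f ∈ B`, i.e. `1 ∈ R(∂^[i] f)`. -/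
def burgeCode (f : ℕ → ℕ) : List Bool :=
  (List.range (chainK f + 1)).map fun i => if 1 ∈ Rset (dB^[i] f) then true else false

/-- descent set of a word: 1-indexed positions `i` with `ωᵢ = b`, `ω_{i+1} = a`. -/
def descSet (w : List Bool) : Set ℕ :=
  {i | 1 ≤ i ∧ w[i - 1]? = some true ∧ w[i]? = some false}

/-- the descent set of (the Burge code of) a partition. -/
def DesSet (f : ℕ → ℕ) : Set ℕ := descSet (burgeCode f)

/-- `Des(P)` regarded as a partition, via its frequency sequence. -/
def desFreq (f : ℕ → ℕ) : ℕ → ℕ := fun i => if i ∈ DesSet f then 1 else 0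

/-- the 2-measure as the maximal size of a subset of the support without
consecutive pairs. -/
def twoMeasure (f : ℕ → ℕ) : ℕ :=
  sSup {n | ∃ T : Finset ℕ, (↑T : Set ℕ) ⊆ suppF f ∧ (∀ x ∈ T, x + 1 ∉ T) ∧ T.card = n}

/-- evaluation at `i`: `ν_i(f) = i f_i + (i+1) f_{i+1} + 2 ∑_{j>i+1} f_j`, with `ν₀ = ν₁`. -/
def nuI (f : ℕ → ℕ) (i : ℕ) : ℕ :=
  (max i 1) * f (max i 1) + (max i 1 + 1) * f (max i 1 + 1)
    + 2 * ∑ᶠ j ∈ {j : ℕ | max i 1 + 1 < j}, f j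

/-- annihilation at `i`: `ρ_i(f) = (f₁, …, f_{i-1}, f_{i+2}, f_{i+3}, …)`, with `ρ₀ = ρ₁`. -/
def rhoI (f : ℕ → ℕ) (i : ℕ) : ℕ → ℕ := fun n =>
  if n = 0 then 0 else if n < max i 1 then f n else f (n + 2)

/-- `i ≥ 1` is right admissible in `f`. -/
def RightAdm (f : ℕ → ℕ) (i : ℕ) : Prop :=
  1 ≤ i ∧ 0 < f i ∧ (0 < f (i + 1) ∨ (f (i - 1) = 0 ∧ f (i + 1) = 0))

/-- `i ≥ 0` is left admissible in `f`. -/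
def LeftAdm (f : ℕ → ℕ) (i : ℕ) : Prop :=
  0 < f (i + 1) ∧ (0 < f i ∨ (f i = 0 ∧ f (i + 2) = 0))

/-- `i` is a maximal index for `f`: `ν_i(f)` is nonzero and maximal. -/
def MaxIdx (f : ℕ → ℕ) (i : ℕ) : Prop :=
  nuI f i ≠ 0 ∧ ∀ j, nuI f j ≤ nuI f i

end

section Aux

lemma sum_gt_succ (f : ℕ → ℕ) (hf : (Function.support f).Finite) (k : ℕ) :
    ∑ᶠ j ∈ {j : ℕ | k < j}, f j = f (k+1) + ∑ᶠ j ∈ {j : ℕ | k+1 < j}, f j := by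
  have hset : {j : ℕ | k < j} = insert (k+1) {j : ℕ | k+1 < j} := by
    ext x; simp only [Set.mem_setOf_eq, Set.mem_insert_iff]; omega
  rw [hset, finsum_mem_insert' f (by simp) (hf.inter_of_right _)]

lemma nu_step (f : ℕ → ℕ) (hf : (Function.support f).Finite) (I : ℕ) (hI : 1 ≤ I) :
    nuI f (I+1) + I * f I = nuI f I + I * f (I+2) := by
  have h1 : max I 1 = I := max_eq_left hI
  have h2 : max (I+1) 1 = I+1 := max_eq_left (by omega)
  rw [nuI, nuI, h1, h2, sum_gt_succ f hf (I+1)]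
  ring

lemma nu_max_eq (f : ℕ → ℕ) (i : ℕ) : nuI f i = nuI f (max i 1) := by
  rw [nuI, nuI, max_eq_left (le_max_right i 1)]

lemma rho_max_eq (f : ℕ → ℕ) (i : ℕ) : rhoI f i = rhoI f (max i 1) := by
  funext n
  rw [rhoI, rhoI, max_eq_left (le_max_right i 1)]

lemma rho_succ (f : ℕ → ℕ) (I : ℕ) (hI : 1 ≤ I) (h : f I = f (I+2)) :
    rhoI f I = rhoI f (I+1) := by
  have h1 : max I 1 = I := max_eq_left hI
  have h2 : max (I+1) 1 = I+1 := max_eq_left (by omega)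
  funext n
  rw [rhoI, rhoI, h1, h2]
  rcases eq_or_ne n 0 with rfl | hn
  · simp
  simp only [if_neg hn]
  rcases lt_trichotomy n I with hlt | rfl | hgt
  · rw [if_pos hlt, if_pos (by omega)]
  · rw [if_neg (by omega), if_pos (by omega), h]
  · rw [if_neg (by omega), if_neg (by omega)]

lemma all_zero (f : ℕ → ℕ) (hf : (Function.support f).Finite) (I : ℕ) (hI : 1 ≤ I)
    (hmax : ∀ j, nuI f j ≤ nuI f I) (h0 : f I = 0) (h1 : f (I+1) = 0) :
    nuI f I = 0 := by
  have key : ∀ k, (∀ j, nuI f j ≤ nuI f (I+k)) ∧ f (I+k) = 0 ∧ f (I+k+1) = 0 := by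
    intro k
    induction k with
    | zero => exact ⟨hmax, h0, h1⟩
    | succ k ih =>
      obtain ⟨hm, ha, hb⟩ := ih
      have hstep := nu_step f hf (I+k) (by omega)
      have hb' : (I+k) * f (I+k) = 0 := by rw [ha, Nat.mul_zero]
      have hm' := hm (I+k+1)
      have hd : (I+k) * f (I+k+2) = 0 := by omega
      have hz : f (I+k+2) = 0 := by
        rcases Nat.mul_eq_zero.mp hd with h | h
        · omega
        · exact h
      have heq : nuI f (I+(k+1)) = nuI f (I+k) := by
        rw [show I+(k+1) = I+k+1 by omega]; omega
      exact ⟨fun j => heq ▸ hm j, by rw [show I+(k+1) = I+k+1 by omega]; exact hb,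
        by rw [show I+(k+1)+1 = I+k+2 by omega]; exact hz⟩
  have hzero : ∀ j, I ≤ j → f j = 0 := by
    intro j hj
    obtain ⟨k, rfl⟩ := Nat.exists_eq_add_of_le hj
    exact (key k).2.1
  have h1' : max I 1 = I := max_eq_left hI
  rw [nuI, h1']
  have hs : ∑ᶠ j ∈ {j : ℕ | I + 1 < j}, f j = 0 := by
    apply finsum_mem_of_eqOn_zero
    intro j hj
    exact hzero j (by simp only [Set.mem_setOf_eq] at hj; omega)
  rw [hs, h0, h1]
  ring

end Aux

/-- if `f` is nonzero and `i` is a maximal index for `f`, then `i`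
is equivalent (same annihilation) to some right admissible index and also to
some left admissible index. -/
theorem stmt18 (f : ℕ → ℕ) (hf : IsFreq f) (hne : f ≠ zeroF) (i : ℕ)
    (hi : MaxIdx f i) :
    (∃ j, RightAdm f j ∧ rhoI f i = rhoI f j) ∧
    (∃ j, LeftAdm f j ∧ rhoI f i = rhoI f j) := by
  obtain ⟨hnu, hmax0⟩ := hi
  set I := max i 1 with hIdef
  have hI : 1 ≤ I := le_max_right i 1
  have hmax : ∀ j, nuI f j ≤ nuI f I := fun j => (nu_max_eq f i) ▸ hmax0 j
  have hnu' : nuI f I ≠ 0 := (nu_max_eq f i) ▸ hnu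
  have hrho : rhoI f i = rhoI f I := rho_max_eq f i
  have hfin := hf.2
  have hle : f (I+2) ≤ f I := by
    have hstep := nu_step f hfin I hI
    have hm' := hmax (I+1)
    have : I * f (I+2) ≤ I * f I := by omega
    exact Nat.le_of_mul_le_mul_left this (by omega)
  rcases Nat.eq_zero_or_pos (f I) with hI0 | hI0
  · have hI2 : f (I+2) = 0 := by omega
    have hI1 : 0 < f (I+1) := by
      rcases Nat.eq_zero_or_pos (f (I+1)) with h | h
      · exact absurd (all_zero f hfin I hI hmax hI0 h) hnu'
      · exact h
    have hr : rhoI f I = rhoI f (I+1) := rho_succ f I hI (by omega)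
    constructor
    · exact ⟨I+1, ⟨by omega, hI1, Or.inr ⟨by simpa using hI0, hI2⟩⟩, hrho.trans hr⟩
    · exact ⟨I, ⟨hI1, Or.inr ⟨hI0, hI2⟩⟩, hrho⟩
  · rcases Nat.eq_zero_or_pos (f (I+1)) with hI1 | hI1
    · have hIm : f (I-1) = 0 := by
        rcases eq_or_lt_of_le hI with h1 | h2
        · rw [show I - 1 = 0 by omega]; exact hf.1
        · have hstep := nu_step f hfin (I-1) (by omega)
          rw [show I-1+1 = I by omega, show I-1+2 = I+1 by omega] at hstep
          have hm' := hmax (I-1)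
          have hmul : (I-1) * f (I-1) ≤ (I-1) * f (I+1) := by omega
          have := Nat.le_of_mul_le_mul_left hmul (by omega : 0 < I-1)
          omega
      have hr : rhoI f I = rhoI f (I-1) := by
        rcases eq_or_lt_of_le hI with h1 | h2
        · have e0 : rhoI f 0 = rhoI f 1 := by
            have h := rho_max_eq f 0
            simpa using h
          rw [show I = 1 by omega, show (1:ℕ) - 1 = 0 from rfl]
          exact e0.symm
        · have := rho_succ f (I-1) (by omega)
            (by rw [show I-1+2 = I+1 by omega]; omega)
          rw [show I-1+1 = I by omega] at this
          exact this.symm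
      constructor
      · exact ⟨I, ⟨hI, hI0, Or.inr ⟨hIm, hI1⟩⟩, hrho⟩
      · refine ⟨I-1, ⟨by rw [show I-1+1 = I by omega]; exact hI0, ?_⟩, hrho.trans hr⟩
        rcases Nat.eq_zero_or_pos (f (I-1)) with h | h
        · exact Or.inr ⟨h, by rw [show I-1+2 = I+1 by omega]; exact hI1⟩
        · exact Or.inl h
    · constructor
      · exact ⟨I, ⟨hI, hI0, Or.inl hI1⟩, hrho⟩
      · exact ⟨I, ⟨hI1, Or.inl hI0⟩, hrho⟩
end

section
/- If i is left admissible for f, maximal for f (ν_i(f) is the nonzero maximum of all evaluations), and f ≠ (1), then i is maximal for ∂f and ν_i(∂f) = ν_i(f) − 1. -/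
open scoped Classical

/-- the sequence `(1)`, i.e. the partition with a single part 1. -/
def oneF : ℕ → ℕ := fun n => if n = 1 then 1 else 0


namespace Stmt19Aux

lemma mem_Rset_ne (f : ℕ → ℕ) {q : ℕ} (h : q ∈ Rset f) : f q ≠ 0 ∧ 1 ≤ q := by
  obtain ⟨a, b, hs, h1, h2, _⟩ := h
  exact ⟨hs.2.2.1 q h1 h2, le_trans hs.1 h1⟩

lemma exists_bound (f : ℕ → ℕ) (hf : IsFreq f) : ∃ N, ∀ k, N ≤ k → f k = 0 := by
  obtain ⟨N, hN⟩ := hf.2.bddAbove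
  refine ⟨N + 1, fun k hk => ?_⟩
  by_contra h
  have : k ≤ N := hN (by exact h)
  omega

lemma exists_spread (f : ℕ → ℕ) (hf : IsFreq f) {q : ℕ} (hq : f q ≠ 0) :
    ∃ a b, IsSpread f a b ∧ a ≤ q ∧ q ≤ b := by
  have hq1 : 1 ≤ q := by
    rcases Nat.eq_zero_or_pos q with h | h
    · exact absurd (h ▸ hf.1) hq
    · exact h
  obtain ⟨N, hN⟩ := exists_bound f hf
  have hb : ∃ m, f (q + m + 1) = 0 := ⟨N, hN _ (by omega)⟩
  have hfb : f (q + Nat.find hb + 1) = 0 := Nat.find_spec hb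
  have hbcov : ∀ k, q ≤ k → k ≤ q + Nat.find hb → f k ≠ 0 := by
    intro k h1 h2
    rcases Nat.eq_or_lt_of_le h1 with h | h
    · exact h ▸ hq
    · have ht : k - q - 1 < Nat.find hb := by omega
      have hm := Nat.find_min hb ht
      have hk : q + (k - q - 1) + 1 = k := by omega
      rwa [hk] at hm
  have ha : ∃ m, q - m = 1 ∨ f (q - m - 1) = 0 := ⟨q - 1, Or.inl (by omega)⟩
  have hma : Nat.find ha ≤ q - 1 := Nat.find_min' ha (Or.inl (by omega))
  have hspec : q - Nat.find ha = 1 ∨ f (q - Nat.find ha - 1) = 0 := Nat.find_spec ha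
  have hacov : ∀ k, q - Nat.find ha ≤ k → k ≤ q → f k ≠ 0 := by
    intro k h1 h2
    rcases Nat.eq_or_lt_of_le h2 with h | h
    · exact h ▸ hq
    · have ht : q - k - 1 < Nat.find ha := by omega
      have hmin := Nat.find_min ha ht
      push_neg at hmin
      have hk : q - (q - k - 1) - 1 = k := by omega
      exact hk ▸ hmin.2
  refine ⟨q - Nat.find ha, q + Nat.find hb, ⟨by omega, by omega, ?_, hspec, hfb⟩, by omega, by omega⟩
  intro k h1 h2
  rcases le_or_gt k q with h | h
  · exact hacov k h1 h
  · exact hbcov k (by omega) h2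

lemma spread_uniq {f : ℕ → ℕ} {a b a' b' q : ℕ} (h1 : IsSpread f a b) (h2 : IsSpread f a' b')
    (hq1 : a ≤ q) (hq2 : q ≤ b) (hq3 : a' ≤ q) (hq4 : q ≤ b') : a = a' ∧ b = b' := by
  have key : ∀ {x y x' y' : ℕ}, IsSpread f x y → IsSpread f x' y' →
      x ≤ q → q ≤ y → x' ≤ q → q ≤ y' → y ≤ y' ∧ x' ≤ x := by
    intro x y x' y' g1 g2 k1 k2 k3 k4
    constructor
    · by_contra h
      push_neg at h
      exact g1.2.2.1 (y' + 1) (by omega) (by omega) g2.2.2.2.2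
    · by_contra h
      push_neg at h
      have hne := g1.2.2.1 (x' - 1) (by omega) (by omega)
      rcases g2.2.2.2.1 with hc | hc
      · have := g1.1; omega
      · exact hne hc
  obtain ⟨hb1, ha1⟩ := key h1 h2 hq1 hq2 hq3 hq4
  obtain ⟨hb2, ha2⟩ := key h2 h1 hq3 hq4 hq1 hq2
  omega

lemma mem_Rset_iff {f : ℕ → ℕ} {a b q : ℕ} (hs : IsSpread f a b) (h1 : a ≤ q) (h2 : q ≤ b) :
    q ∈ Rset f ↔ (b - q) % 2 = 0 := by
  constructor
  · rintro ⟨a', b', hs', h1', h2', hp⟩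
    obtain ⟨-, hb⟩ := spread_uniq hs' hs h1' h2' h1 h2
    omega
  · intro hp
    exact ⟨a, b, hs, h1, h2, hp⟩

lemma mem_R_end {f : ℕ → ℕ} (hf : IsFreq f) {q : ℕ} (hq : f q ≠ 0) (hq1 : f (q + 1) = 0) :
    q ∈ Rset f := by
  obtain ⟨a, b, hs, h1, h2⟩ := exists_spread f hf hq
  have hb : b = q := by
    by_contra h
    exact hs.2.2.1 (q + 1) (by omega) (by omega) hq1
  exact ⟨a, b, hs, h1, h2, by omega⟩

lemma mem_R_alt {f : ℕ → ℕ} (hf : IsFreq f) {q : ℕ} (hq : f q ≠ 0) (hq1 : f (q + 1) ≠ 0) :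
    (q ∈ Rset f ↔ ¬ (q + 1 ∈ Rset f)) := by
  obtain ⟨a, b, hs, h1, h2⟩ := exists_spread f hf hq
  have hb : q + 1 ≤ b := by
    by_contra h
    have hbq : b = q := by omega
    exact hq1 (hbq ▸ hs.2.2.2.2)
  rw [mem_Rset_iff hs h1 h2, mem_Rset_iff hs (by omega) hb]
  omega

lemma mem_R_step {f : ℕ → ℕ} {q : ℕ} (hq : q ∈ Rset f) (hq1 : f (q + 1) ≠ 0) :
    q + 2 ∈ Rset f := by
  obtain ⟨a, b, hs, h1, h2, hp⟩ := hq
  have hb : q + 1 ≤ b := by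
    by_contra h
    have hbq : b = q := by omega
    exact hq1 (hbq ▸ hs.2.2.2.2)
  exact ⟨a, b, hs, by omega, by omega, by omega⟩

lemma mem_R_or {f : ℕ → ℕ} (hf : IsFreq f) {q : ℕ} (hq : f q ≠ 0) :
    q ∈ Rset f ∨ q + 1 ∈ Rset f := by
  by_cases h : f (q + 1) = 0
  · exact Or.inl (mem_R_end hf hq h)
  · by_cases h2 : q ∈ Rset f
    · exact Or.inl h2
    · refine Or.inr ?_
      by_contra h3
      exact h2 ((mem_R_alt hf hq h).mpr h3)

lemma finsum_gt_eq (f : ℕ → ℕ) (c N : ℕ) (hN : ∀ k, N ≤ k → f k = 0) :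
    ∑ᶠ k ∈ {k : ℕ | c < k}, f k = ∑ k ∈ Finset.Ico (c + 1) N, f k := by
  apply finsum_mem_eq_sum_of_inter_support_eq
  ext k
  simp only [Set.mem_inter_iff, Set.mem_setOf_eq, Function.mem_support, Finset.coe_Ico,
    Set.mem_Ico]
  constructor
  · rintro ⟨h1, h2⟩
    refine ⟨⟨by omega, ?_⟩, h2⟩
    by_contra h
    exact h2 (hN k (by omega))
  · rintro ⟨⟨h1, _⟩, h2⟩
    exact ⟨by omega, h2⟩

lemma nuI_eq (f : ℕ → ℕ) (j N : ℕ) (hj : 1 ≤ j) (hN : ∀ k, N ≤ k → f k = 0) :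
    nuI f j = j * f j + (j + 1) * f (j + 1) + 2 * ∑ k ∈ Finset.Ico (j + 2) N, f k := by
  have hm : max j 1 = j := by omega
  rw [nuI, hm, finsum_gt_eq f (j + 1) N hN]

lemma nuI_max (f : ℕ → ℕ) (j : ℕ) : nuI f j = nuI f (max j 1) := by
  have h : max (max j 1) 1 = max j 1 := by omega
  rw [nuI, nuI, h]

lemma dB_point (f : ℕ → ℕ) {k : ℕ} (hk : k ≠ 0) :
    dB f k + (if k ∈ Rset f then 1 else 0) = f k + (if k + 1 ∈ Rset f then 1 else 0) := by
  rw [dB]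
  simp only [if_neg hk]
  by_cases h : k ∈ Rset f
  · have hne := (mem_Rset_ne f h).1
    by_cases h2 : k + 1 ∈ Rset f <;> simp [h, h2] <;> omega
  · by_cases h2 : k + 1 ∈ Rset f <;> simp [h, h2]

lemma dB_bound (f : ℕ → ℕ) (N : ℕ) (hN : ∀ k, N ≤ k → f k = 0) {k : ℕ} (hk : N ≤ k) :
    dB f k = 0 := by
  have h1 : k ∉ Rset f := fun h => (mem_Rset_ne f h).1 (hN k hk)
  have h2 : k + 1 ∉ Rset f := fun h => (mem_Rset_ne f h).1 (hN (k + 1) (by omega))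
  rw [dB]
  simp [h1, h2, hN k hk]

lemma tele (f : ℕ → ℕ) (m N : ℕ) (hm : 1 ≤ m) (hmN : m ≤ N) :
    ∑ k ∈ Finset.Ico m N, dB f k + (if m ∈ Rset f then 1 else 0)
      = ∑ k ∈ Finset.Ico m N, f k + (if N ∈ Rset f then 1 else 0) := by
  induction N, hmN using Nat.le_induction with
  | base => simp
  | succ n hn ih =>
    rw [Finset.sum_Ico_succ_top hn, Finset.sum_Ico_succ_top hn]
    have hp := dB_point f (k := n) (by omega)
    linarith [ih, hp]

lemma master (f : ℕ → ℕ) (hf : IsFreq f) (j : ℕ) (hj : 1 ≤ j) :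
    nuI (dB f) j + (j * (if j ∈ Rset f then 1 else 0)
      + (j + 1) * (if j + 1 ∈ Rset f then 1 else 0)
      + 2 * (if j + 2 ∈ Rset f then 1 else 0))
    = nuI f j + (j * (if j + 1 ∈ Rset f then 1 else 0)
      + (j + 1) * (if j + 2 ∈ Rset f then 1 else 0)) := by
  obtain ⟨N0, hN0⟩ := exists_bound f hf
  have hN : ∀ k, max N0 (j + 3) ≤ k → f k = 0 := fun k hk => hN0 k (by omega)
  have hN' : ∀ k, max N0 (j + 3) ≤ k → dB f k = 0 := fun k hk => dB_bound f _ hN hk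
  have hRN : (max N0 (j + 3)) ∉ Rset f := fun h => (mem_Rset_ne f h).1 (hN _ le_rfl)
  have e1 := nuI_eq (dB f) j (max N0 (j + 3)) hj hN'
  have e2 := nuI_eq f j (max N0 (j + 3)) hj hN
  have h1 := dB_point f (k := j) (by omega)
  have h2 := dB_point f (k := j + 1) (by omega)
  have h3 := tele f (j + 2) (max N0 (j + 3)) (by omega) (by omega)
  rw [if_neg hRN] at h3
  have m1 : j * (dB f j + (if j ∈ Rset f then 1 else 0))
      = j * (f j + (if j + 1 ∈ Rset f then 1 else 0)) := by rw [h1]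
  have m2 : (j + 1) * (dB f (j + 1) + (if j + 1 ∈ Rset f then 1 else 0))
      = (j + 1) * (f (j + 1) + (if j + 2 ∈ Rset f then 1 else 0)) := by rw [h2]
  rw [Nat.mul_add, Nat.mul_add] at m1
  rw [Nat.mul_add, Nat.mul_add] at m2
  rw [e1, e2]
  linarith [m1, m2, h3]

lemma rec_lemma (f : ℕ → ℕ) (hf : IsFreq f) (a : ℕ) (ha : 1 ≤ a) (hfa : f a = 0) :
    nuI f a + a * f (a + 2) = nuI f (a + 1) := by
  obtain ⟨N0, hN0⟩ := exists_bound f hf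
  have hN : ∀ k, max N0 (a + 3) ≤ k → f k = 0 := fun k hk => hN0 k (by omega)
  have e1 := nuI_eq f a (max N0 (a + 3)) ha hN
  have e2 := nuI_eq f (a + 1) (max N0 (a + 3)) (by omega) hN
  have hsplit : ∑ k ∈ Finset.Ico (a + 2) (max N0 (a + 3)), f k
      = f (a + 2) + ∑ k ∈ Finset.Ico (a + 3) (max N0 (a + 3)), f k :=
    Finset.sum_eq_sum_Ico_succ_bot (by omega) _
  have ha2 : a + 1 + 1 = a + 2 := by omega
  have ha3 : a + 1 + 2 = a + 3 := by omega
  rw [ha2, ha3] at e2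
  rw [e1, e2, hsplit, hfa]
  ring

lemma mono_chain (f : ℕ → ℕ) (hf : IsFreq f) (t : ℕ) :
    ∀ a, 1 ≤ a → (∀ k, a ≤ k → k < a + t → f k = 0) → nuI f a ≤ nuI f (a + t) := by
  induction t with
  | zero => intro a _ _; simp
  | succ n ih =>
    intro a ha h0
    have h1 : nuI f a ≤ nuI f (a + n) := ih a ha (fun k hk1 hk2 => h0 k hk1 (by omega))
    have h2 := rec_lemma f hf (a + n) (by omega) (h0 _ (by omega) (by omega))
    have h3 : nuI f (a + (n + 1)) = nuI f (a + n + 1) := by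
      rw [show a + (n + 1) = a + n + 1 from rfl]
    omega

end Stmt19Aux

/-- if `i` is left admissible and maximal for `f` and `f ≠ (1)`,
then `i` is maximal for `∂f` and `ν_i(∂f) = ν_i(f) - 1`. -/
theorem stmt19 (f : ℕ → ℕ) (hf : IsFreq f) (i : ℕ)
    (hL : LeftAdm f i) (hmax : MaxIdx f i) (hne : f ≠ oneF) :
    MaxIdx (dB f) i ∧ nuI (dB f) i = nuI f i - 1 := by
  obtain ⟨hne0, hmaxall⟩ := hmax
  have hkey : ∀ q, 1 ≤ q →
      ((f (q + 1) ≠ 0 ∧ (f q ≠ 0 ∨ f (q + 2) = 0)) ∨ (f q ≠ 0 ∧ f (q + 1) = 0 ∧ q = 1)) →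
      nuI (dB f) q + 1 = nuI f q := by
    intro q hq hpat
    have hm := Stmt19Aux.master f hf q hq
    rcases hpat with ⟨h1, h2⟩ | ⟨h1, h2, h3⟩
    · by_cases hfq : f q = 0
      case pos =>
        have h2 : f q = 0 ∧ f (q + 2) = 0 := ⟨hfq, by tauto⟩
        have hr : q ∉ Rset f := fun h => (Stmt19Aux.mem_Rset_ne f h).1 h2.1
        have hr1 : q + 1 ∈ Rset f := by
          have := Stmt19Aux.mem_R_end hf h1 (by rw [show q + 1 + 1 = q + 2 from rfl]; exact h2.2)
          exact this
        have hr2 : q + 2 ∉ Rset f := fun h => (Stmt19Aux.mem_Rset_ne f h).1 h2.2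
        simp [hr, hr1, hr2] at hm
        omega
      case neg =>
        have h2 : f q ≠ 0 := hfq
        by_cases hr : q ∈ Rset f
        · have hr1 : q + 1 ∉ Rset f := (Stmt19Aux.mem_R_alt hf h2 h1).mp hr
          have hr2 : q + 2 ∈ Rset f := Stmt19Aux.mem_R_step hr h1
          simp [hr, hr1, hr2] at hm
          omega
        · have hr1 : q + 1 ∈ Rset f := by
            by_contra h
            exact hr ((Stmt19Aux.mem_R_alt hf h2 h1).mpr h)
          have hr2 : q + 2 ∉ Rset f := by
            intro h
            have hx := (Stmt19Aux.mem_Rset_ne f h).1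
            have hx2 : f (q + 1 + 1) ≠ 0 := by
              rw [show q + 1 + 1 = q + 2 from rfl]; exact hx
            have := (Stmt19Aux.mem_R_alt hf h1 hx2).mp hr1
            rw [show q + 1 + 1 = q + 2 from rfl] at this
            exact this h
          simp [hr, hr1, hr2] at hm
          omega
    · have hr : q ∈ Rset f := Stmt19Aux.mem_R_end hf h1 h2
      have hr1 : q + 1 ∉ Rset f := fun h => (Stmt19Aux.mem_Rset_ne f h).1 h2
      by_cases hr2 : q + 2 ∈ Rset f <;> simp [hr, hr1, hr2] at hm <;> omega
  have hpat : (f (max i 1 + 1) ≠ 0 ∧ (f (max i 1) ≠ 0 ∨ f (max i 1 + 2) = 0)) ∨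
      (f (max i 1) ≠ 0 ∧ f (max i 1 + 1) = 0 ∧ max i 1 = 1) := by
    rcases Nat.eq_zero_or_pos i with h0 | h0
    · have hm01 : max i 1 = 1 := by omega
      rw [hm01]
      subst h0
      have h1 : f 1 ≠ 0 := by
        have := hL.1
        simp only [Nat.zero_add] at this
        omega
      have h2 : f 2 = 0 := by
        rcases hL.2 with h | h
        · rw [hf.1] at h; omega
        · exact h.2
      exact Or.inr ⟨h1, h2, rfl⟩
    · have hm01 : max i 1 = i := by omega
      rw [hm01]
      refine Or.inl ⟨by have := hL.1; omega, ?_⟩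
      rcases hL.2 with h | h
      · exact Or.inl (by omega)
      · exact Or.inr h.2
  have hkey_i : nuI (dB f) i + 1 = nuI f i := by
    have h := hkey (max i 1) (by omega) hpat
    rw [Stmt19Aux.nuI_max (dB f) i, Stmt19Aux.nuI_max f i]
    exact h
  have hge2 : 2 ≤ nuI f i := by
    obtain ⟨N0, hN0⟩ := Stmt19Aux.exists_bound f hf
    rcases Nat.eq_zero_or_pos i with h0 | h0
    · have h1 : f 1 ≠ 0 := by
        have := hL.1; subst h0; simp only [Nat.zero_add] at this; omega
      have h2 : f 2 = 0 := by
        subst h0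
        rcases hL.2 with h | h
        · rw [hf.1] at h; omega
        · exact h.2
      have hN : ∀ k, max N0 4 ≤ k → f k = 0 := fun k hk => hN0 k (by omega)
      have e := Stmt19Aux.nuI_eq f 1 (max N0 4) (by omega) hN
      norm_num at e
      have hmi : nuI f i = nuI f 1 := by
        subst h0
        rw [Stmt19Aux.nuI_max f 0, show (max 0 1 : ℕ) = 1 by omega]
      by_cases hS : ∑ k ∈ Finset.Ico 3 (max N0 4), f k = 0
      · by_cases hf1 : f 1 = 1
        · exfalso
          apply hne
          funext k
          rw [oneF]
          rcases Nat.lt_or_ge k 3 with hk | hk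
          · interval_cases k
            · simpa using hf.1
            · simpa using hf1
            · simpa using h2
          · rw [if_neg (by omega)]
            rcases Nat.lt_or_ge k (max N0 4) with hk2 | hk2
            · exact Finset.sum_eq_zero_iff.mp hS k (Finset.mem_Ico.mpr ⟨hk, hk2⟩)
            · exact hN k hk2
        · omega
      · omega
    · have hN : ∀ k, max N0 (i + 3) ≤ k → f k = 0 := fun k hk => hN0 k (by omega)
      have e := Stmt19Aux.nuI_eq f i (max N0 (i + 3)) (by omega) hN
      have h1 : 1 ≤ f (i + 1) := hL.1
      have h2 : 2 ≤ (i + 1) * f (i + 1) := by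
        calc (2:ℕ) = 2 * 1 := by omega
        _ ≤ (i + 1) * f (i + 1) := Nat.mul_le_mul (by omega) h1
      linarith [e, h2, Nat.zero_le (i * f i), Nat.zero_le (2 * ∑ k ∈ Finset.Ico (i + 2) (max N0 (i + 3)), f k)]
  have hbd : ∀ j, 1 ≤ j → nuI (dB f) j + 1 ≤ nuI f i := by
    intro j hj
    have hm := Stmt19Aux.master f hf j hj
    by_cases r2 : j + 1 ∈ Rset f
    · have r3 : j + 2 ∉ Rset f := by
        intro h3
        have hx1 := (Stmt19Aux.mem_Rset_ne f r2).1
        have hx2 : f (j + 1 + 1) ≠ 0 := by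
          rw [show j + 1 + 1 = j + 2 from rfl]; exact (Stmt19Aux.mem_Rset_ne f h3).1
        have := (Stmt19Aux.mem_R_alt hf hx1 hx2).mp r2
        rw [show j + 1 + 1 = j + 2 from rfl] at this
        exact this h3
      by_cases r1 : j ∈ Rset f
      · simp [r1, r2, r3] at hm
        have := hmaxall j
        omega
      · simp [r1, r2, r3] at hm
        have := hmaxall j
        omega
    · by_cases r1 : j ∈ Rset f
      · by_cases r3 : j + 2 ∈ Rset f
        · simp [r1, r2, r3] at hm; have := hmaxall j; omega
        · simp [r1, r2, r3] at hm; have := hmaxall j; omega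
      · by_cases r3 : j + 2 ∈ Rset f
        · have hfj : f j = 0 := by
            by_contra h
            rcases Stmt19Aux.mem_R_or hf h with h' | h' <;> tauto
          have hrec := Stmt19Aux.rec_lemma f hf j hj hfj
          have hge : j ≤ j * f (j + 2) :=
            Nat.le_mul_of_pos_right j (Nat.pos_of_ne_zero (Stmt19Aux.mem_Rset_ne f r3).1)
          have hm1 := hmaxall (j + 1)
          simp [r1, r2, r3] at hm
          linarith [hm, hrec, hge, hm1]
        · have hfj : f j = 0 := by
            by_contra h
            rcases Stmt19Aux.mem_R_or hf h with h' | h' <;> tauto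
          have hfj1 : f (j + 1) = 0 := by
            by_contra h
            have := Stmt19Aux.mem_R_or hf h
            rw [show j + 1 + 1 = j + 2 from rfl] at this
            tauto
          simp [r1, r2, r3] at hm
          by_cases hz : nuI f j = 0
          · omega
          · have hex : ∃ k, j + 2 ≤ k ∧ f k ≠ 0 := by
              by_contra hc
              push_neg at hc
              have e := Stmt19Aux.nuI_eq f j (j + 2) hj (fun k hk => hc k hk)
              rw [Finset.Ico_self] at e
              simp [hfj, hfj1] at e
              exact hz e
            have hspec := Nat.find_spec hex
            have hzero : ∀ k, j ≤ k → k < Nat.find hex → f k = 0 := by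
              intro k hk1 hk2
              rcases Nat.lt_or_ge k (j + 2) with h | h
              · rcases (by omega : k = j ∨ k = j + 1) with h' | h' <;> simp [h', hfj, hfj1]
              · have hmin := Nat.find_min hex hk2
                push_neg at hmin
                exact hmin h
            have hchain := Stmt19Aux.mono_chain f hf (Nat.find hex - 2 - j) j hj
              (fun k hk1 hk2 => hzero k hk1 (by omega))
            rw [show j + (Nat.find hex - 2 - j) = Nat.find hex - 2 by omega] at hchain
            have hrec := Stmt19Aux.rec_lemma f hf (Nat.find hex - 2) (by omega)
              (hzero _ (by omega) (by omega))
            rw [show Nat.find hex - 2 + 2 = Nat.find hex by omega,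
              show Nat.find hex - 2 + 1 = Nat.find hex - 1 by omega] at hrec
            have hpos : 1 ≤ (Nat.find hex - 2) * f (Nat.find hex) :=
              Nat.one_le_iff_ne_zero.mpr (Nat.mul_ne_zero (by omega) hspec.2)
            have hlast := hmaxall (Nat.find hex - 1)
            linarith [hm, hchain, hrec, hpos, hlast]
  have hmax2 : ∀ j, nuI (dB f) j ≤ nuI (dB f) i := by
    intro j
    have h1 : nuI (dB f) j = nuI (dB f) (max j 1) := Stmt19Aux.nuI_max (dB f) j
    have h2 := hbd (max j 1) (by omega)
    omega
  exact ⟨⟨by omega, hmax2⟩, by omega⟩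
end
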